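/- Let R be a commutative unital ring and p : (M,F) → (N,F) a morphism of filtered cochain complexes of R-modules. Then p has the right lifting property with respect to the filtered map S_R(n+1,p) → D_R(n,p) for every n ∈ ℤ and p ∈ ℕ if and only if for every k ∈ ℕ the restriction F^k p : F^kM → F^kN is degreewise surjective and a quasi-isomorphism (equivalently, degreewise surjective with acyclic kernel). -/

import Mathlib

open CategoryTheory Limits ZeroObject

noncomputable section

variable (R : Type) [CommRing R]

/-- The category of unbounded cochain complexes of `R`-modules. -/
abbrev Cx := CochainComplex (ModuleCat.{0} R) ℤ



/-- The underlying module of `D_R(n)` in degree `i`: it is (isomorphic to) `R` if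
`i = n` or `i = n+1`, and the zero module otherwise. -/
abbrev diskFun (n i : ℤ) : Type := PLift (i = n ∨ i = n + 1) → R

/-- The differential of the disk complex `D_R(n)`. -/
def diskD (n i j : ℤ) : (diskFun R n i) →ₗ[R] (diskFun R n j) where
  toFun f _ := if hij : i = n ∧ j = n + 1 then f ⟨Or.inl hij.1⟩ else 0
  map_add' f g := by
    funext h
    by_cases hij : i = n ∧ j = n + 1 <;> simp [hij]
  map_smul' r f := by
    funext h
    by_cases hij : i = n ∧ j = n + 1 <;> simp [hij]

lemma diskD_apply (n i j : ℤ) (f : diskFun R n i) (h : PLift (j = n ∨ j = n + 1)) :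
    diskD R n i j f h = if hij : i = n ∧ j = n + 1 then f ⟨Or.inl hij.1⟩ else 0 := rfl

/-- The disk complex `D_R(n)`, with `R` in degrees `n` and `n+1`, the identity as the only
non-trivial differential, and `0` elsewhere. -/
def disk (n : ℤ) : Cx R where
  X i := ModuleCat.of R (diskFun R n i)
  d i j := ModuleCat.ofHom (diskD R n i j)
  shape i j hij := by
    apply ModuleCat.hom_ext
    apply LinearMap.ext
    intro f
    funext h
    have hn : ¬ (i = n ∧ j = n + 1) := by
      rintro ⟨rfl, rfl⟩
      exact hij rfl
    show diskD R n i j f h = _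
    rw [diskD_apply, dif_neg hn]
    rfl
  d_comp_d' i j k _ _ := by
    apply ModuleCat.hom_ext
    apply LinearMap.ext
    intro f
    funext h
    show diskD R n j k (diskD R n i j f) h = _
    rw [diskD_apply]
    split_ifs with hjk
    · rw [diskD_apply]
      have hn : ¬ (i = n ∧ j = n + 1) := by
        obtain ⟨h1, h2⟩ := hjk
        rintro ⟨rfl, h3⟩
        omega
      rw [dif_neg hn]
      rfl
    · rfl

/-- The underlying module of `S_R(n)` in degree `i`. -/
abbrev sphereFun (n i : ℤ) : Type := PLift (i = n) → R

/-- The sphere complex `S_R(n)`, with `R` in degree `n` and `0` elsewhere. -/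
def sphere (n : ℤ) : Cx R where
  X i := ModuleCat.of R (sphereFun R n i)
  d _ _ := 0
  shape _ _ _ := rfl
  d_comp_d' := by intros; simp

/-- The degreewise component of the map `S_R(n+1) ⟶ D_R(n)`. -/
def sphereToDiskHom (n i : ℤ) : (sphereFun R (n + 1) i) →ₗ[R] (diskFun R n i) where
  toFun g _ := if hi : i = n + 1 then g ⟨hi⟩ else 0
  map_add' g₁ g₂ := by
    funext h
    by_cases hi : i = n + 1 <;> simp [hi]
  map_smul' r g := by
    funext h
    by_cases hi : i = n + 1 <;> simp [hi]

lemma sphereToDiskHom_apply (n i : ℤ) (g : sphereFun R (n + 1) i)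
    (h : PLift (i = n ∨ i = n + 1)) :
    sphereToDiskHom R n i g h = if hi : i = n + 1 then g ⟨hi⟩ else 0 := rfl

/-- The map `S_R(n+1) ⟶ D_R(n)` which is the identity of `R` in degree `n+1`. -/
def sphereToDisk (n : ℤ) : sphere R (n + 1) ⟶ disk R n where
  f i := ModuleCat.ofHom (sphereToDiskHom R n i)
  comm' i j _ := by
    apply ModuleCat.hom_ext
    apply LinearMap.ext
    intro g
    funext h
    show diskD R n i j (sphereToDiskHom R n i g) h = sphereToDiskHom R n j ((0 : _ →ₗ[R] _) g) h
    simp only [LinearMap.zero_apply, map_zero, Pi.zero_apply]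
    rw [diskD_apply]
    split_ifs with hij
    · change (if hi : i = n + 1 then (g : sphereFun R (n + 1) i) ⟨hi⟩ else 0) = 0
      have hn : ¬ i = n + 1 := by
        obtain ⟨h1, h2⟩ := hij
        omega
      rw [dif_neg hn]
    · rfl

/-- A map of cochain complexes is degreewise surjective if it is surjective in each degree. -/
def DegSurj {M N : Cx R} (p : M ⟶ N) : Prop := ∀ n : ℤ, Function.Surjective (p.f n)


/-- A filtered cochain complex of `R`-modules: a cochain complex `C` together with a
decreasing `ℕ`-indexed filtration by subcomplexes `C = F⁰C ⊇ F¹C ⊇ F²C ⊇ ⋯`. -/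
structure FCx where
  /-- the underlying cochain complex -/
  C : Cx R
  /-- the filtration, given degreewise by submodules -/
  F : ℕ → ∀ i : ℤ, Submodule R (C.X i)
  /-- the filtration is decreasing -/
  antitone : ∀ p q : ℕ, p ≤ q → ∀ i : ℤ, F q i ≤ F p i
  /-- `F⁰C = C` -/
  zero_top : ∀ i : ℤ, F 0 i = ⊤
  /-- each filtration level is a subcomplex -/
  d_stable : ∀ (p : ℕ) (i j : ℤ), ∀ x ∈ F p i, C.d i j x ∈ F p j

/-- A morphism of filtered cochain complexes: a cochain map preserving the filtrations. -/
@[ext]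
structure FHom (M N : FCx R) where
  /-- the underlying cochain map -/
  φ : M.C ⟶ N.C
  /-- compatibility with the filtrations -/
  preserves : ∀ (p : ℕ) (i : ℤ), ∀ x ∈ M.F p i, φ.f i x ∈ N.F p i

/-- The category of filtered cochain complexes of `R`-modules. -/
instance : Category (FCx R) where
  Hom M N := FHom R M N
  id M := ⟨𝟙 M.C, fun p i x hx => by simpa using hx⟩
  comp f g := ⟨f.φ ≫ g.φ, fun p i x hx => by
    have h1 := f.preserves p i x hx
    have h2 := g.preserves p i _ h1
    simpa using h2⟩
  id_comp f := by apply FHom.ext; simp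
  comp_id f := by apply FHom.ext; simp
  assoc f g h := by apply FHom.ext; simp

@[simp] lemma comp_φ {M N P : FCx R} (f : M ⟶ N) (g : N ⟶ P) :
    (f ≫ g).φ = f.φ ≫ g.φ := rfl

/-- The `p`-th level `F^p M` of the filtration, as a cochain complex. -/
def FCx.level {R : Type} [CommRing R] (M : FCx R) (p : ℕ) : Cx R where
  X i := ModuleCat.of R (M.F p i)
  d i j := ModuleCat.ofHom (LinearMap.restrict (M.C.d i j).hom (fun x hx => M.d_stable p i j x hx))
  shape i j hij := by
    apply ModuleCat.hom_ext
    apply LinearMap.ext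
    intro x
    apply Subtype.ext
    show M.C.d i j x.1 = _
    rw [M.C.shape i j hij]
    rfl
  d_comp_d' i j k _ _ := by
    apply ModuleCat.hom_ext
    apply LinearMap.ext
    intro x
    apply Subtype.ext
    show M.C.d j k (M.C.d i j x.1) = _
    have h0 : M.C.d i j ≫ M.C.d j k = 0 := M.C.d_comp_d i j k
    have h1 : M.C.d j k (M.C.d i j x.1) = (M.C.d i j ≫ M.C.d j k) x.1 := rfl
    rw [h1, h0]
    rfl

/-- The restriction `F^p f : F^p M ⟶ F^p N` of a filtered morphism to the `p`-th filtration
levels. -/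
def levelMap {R : Type} [CommRing R] {M N : FCx R} (f : M ⟶ N) (p : ℕ) :
    M.level p ⟶ N.level p where
  f i := ModuleCat.ofHom (LinearMap.restrict (f.φ.f i).hom (fun x hx => f.preserves p i x hx))
  comm' i j _ := by
    apply ModuleCat.hom_ext
    apply LinearMap.ext
    intro x
    apply Subtype.ext
    show N.C.d i j (f.φ.f i x.1) = f.φ.f j (M.C.d i j x.1)
    have h : (f.φ.f i ≫ N.C.d i j) x.1 = (M.C.d i j ≫ f.φ.f j) x.1 := by
      rw [f.φ.comm i j]
    exact h

/-- A filtered morphism is a (projective) fibration if each `F^p f` is degreewise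
surjective. -/
def FFib {M N : FCx R} (f : M ⟶ N) : Prop :=
  ∀ (p : ℕ) (i : ℤ), Function.Surjective ((levelMap f p).f i)

/-- A filtered morphism is a filtered weak equivalence if each `F^p f` is a
quasi-isomorphism, i.e. `H^n (F^p f)` is an isomorphism for all `n` and `p`. -/
def FWeq {M N : FCx R} (f : M ⟶ N) : Prop :=
  ∀ p : ℕ, QuasiIso (levelMap f p)

/-- The filtered disk `D_R(n,p)`: the complex `D_R(n)` with filtration which is everything
in filtration degrees `k ≤ p` and zero above. -/
def fdisk (n : ℤ) (p : ℕ) : FCx R where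
  C := disk R n
  F k _ := if k ≤ p then ⊤ else ⊥
  antitone a b hab i := by
    by_cases hb : b ≤ p
    · have ha : a ≤ p := le_trans hab hb
      simp [ha, hb]
    · simp [hb]
  zero_top i := by simp
  d_stable k i j x hx := by
    by_cases hk : k ≤ p
    · simp [hk]
    · simp only [if_neg hk, Submodule.mem_bot] at hx ⊢
      rw [hx]
      exact map_zero _

/-- The filtered sphere `S_R(n,p)`. -/
def fsphere (n : ℤ) (p : ℕ) : FCx R where
  C := sphere R n
  F k _ := if k ≤ p then ⊤ else ⊥
  antitone a b hab i := by
    by_cases hb : b ≤ p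
    · have ha : a ≤ p := le_trans hab hb
      simp [ha, hb]
    · simp [hb]
  zero_top i := by simp
  d_stable k i j x hx := by
    by_cases hk : k ≤ p
    · simp [hk]
    · simp only [if_neg hk, Submodule.mem_bot] at hx ⊢
      rw [hx]
      exact map_zero _

/-- The filtered map `S_R(n+1,p) ⟶ D_R(n,p)`. -/
def fsphereToDisk (n : ℤ) (p : ℕ) : fsphere R (n + 1) p ⟶ fdisk R n p where
  φ := sphereToDisk R n
  preserves k i x hx := by
    by_cases hk : k ≤ p
    · have h2 : (fdisk R n p).F k i = ⊤ := if_pos hk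
      rw [h2]
      exact Submodule.mem_top
    · have h1 : (fsphere R (n + 1) p).F k i = ⊥ := if_neg hk
      have h2 : (fdisk R n p).F k i = ⊥ := if_neg hk
      rw [h1, Submodule.mem_bot] at hx
      rw [h2, Submodule.mem_bot, hx]
      exact map_zero _

/-- The zero filtered complex. -/
def fzero : FCx R where
  C := 0
  F _ _ := ⊤
  antitone _ _ _ _ := le_refl _
  zero_top _ := rfl
  d_stable _ _ _ _ _ := Submodule.mem_top

/-- The unique (zero) filtered map from the zero filtered complex. -/
def fromFZero (M : FCx R) : fzero R ⟶ M where
  φ := 0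
  preserves p i x _ := by
    have h : ((0 : (fzero R).C ⟶ M.C).f i) x = 0 := by
      rw [HomologicalComplex.zero_f]
      rfl
    rw [h]
    exact (M.F p i).zero_mem


/-- `f` is a retract of `g` in the arrow category: there are morphisms of arrows
`f → g → f` composing to the identity of `f`. -/
def IsRetractOf {C : Type 1} [Category.{0} C] {X Y X' Y' : C} (f : X ⟶ Y) (g : X' ⟶ Y') : Prop :=
  ∃ (i : Arrow.mk f ⟶ Arrow.mk g) (r : Arrow.mk g ⟶ Arrow.mk f), i ≫ r = 𝟙 (Arrow.mk f)

/-- A cochain complex `A` is cofibrant if `0 ⟶ A` has the left lifting property with respect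
to every degreewise surjective quasi-isomorphism. -/
def Cofibrant (A : Cx R) : Prop :=
  ∀ {X Y : Cx R} (p : X ⟶ Y), (∀ n : ℤ, Function.Surjective (p.f n)) → QuasiIso p →
    HasLiftingProperty (0 : (0 : Cx R) ⟶ A) p

/-- A filtered morphism is a cofibration if it has the left lifting property with respect to
every filtered trivial fibration, i.e. every filtered morphism which is in each filtration
level a degreewise surjective quasi-isomorphism. -/
def FCofib {M N : FCx R} (i : M ⟶ N) : Prop :=
  ∀ {X Y : FCx R} (p : X ⟶ Y), FFib R p → FWeq R p → HasLiftingProperty i p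

/-- A filtered complex `A` is cofibrant if `0 ⟶ A` has the left lifting property with
respect to every filtered trivial fibration. -/
def FCofibrant (A : FCx R) : Prop :=
  ∀ {X Y : FCx R} (p : X ⟶ Y), FFib R p → FWeq R p → HasLiftingProperty (fromFZero R A) p

/-! ### Auxiliary machinery -/

section Aux

lemma elemApp {X Y Z : ModuleCat.{0} R} {f : X ⟶ Y} {g : Y ⟶ Z} {h : X ⟶ Z}
    (w : f ≫ g = h) (x : X) : g (f x) = h x := by rw [← w]; rfl

open HomologicalComplex in
lemma pi_ker {A : Cx R} (i j : ℤ) (hij : i + 1 = j) (c : A.cycles j)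
    (hc : A.homologyπ j c = 0) : ∃ a : A.X i, A.toCycles i j a = c := by
  have hprev : (ComplexShape.up ℤ).prev j = i := by simp [← hij]
  have hcolim := A.homologyIsCokernel i j hprev
  have hex : (ShortComplex.mk (A.toCycles i j) (A.homologyπ j)
      (A.toCycles_comp_homologyπ i j)).Exact :=
    ShortComplex.exact_of_g_is_cokernel _ hcolim
  rw [ShortComplex.moduleCat_exact_iff] at hex
  exact hex c hc

open HomologicalComplex in
lemma quasiIsoAt_iff_elem {A B : Cx R} (φ : A ⟶ B) (i j l : ℤ) (hij : i + 1 = j)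
    (hjl : j + 1 = l) :
    QuasiIsoAt φ j ↔
      ((∀ (x : A.X j) (y : B.X i), A.d j l x = 0 → φ.f j x = B.d i j y →
          ∃ a : A.X i, A.d i j a = x) ∧
       (∀ z : B.X j, B.d j l z = 0 → ∃ (w : A.X j) (b : B.X i),
          A.d j l w = 0 ∧ φ.f j w = z + B.d i j b)) := by
  have hnext : (ComplexShape.up ℤ).next j = l := by simp [← hjl]
  have hiA : Function.Injective (A.iCycles j) :=
    (ModuleCat.mono_iff_injective _).1 inferInstance
  have hiB : Function.Injective (B.iCycles j) :=
    (ModuleCat.mono_iff_injective _).1 inferInstance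
  have hπA : Function.Surjective (A.homologyπ j) :=
    (ModuleCat.epi_iff_surjective _).1 inferInstance
  have hπB : Function.Surjective (B.homologyπ j) :=
    (ModuleCat.epi_iff_surjective _).1 inferInstance
  have hnatur : ∀ c : A.cycles j, homologyMap φ j (A.homologyπ j c)
      = B.homologyπ j (cyclesMap φ j c) := by
    intro c
    exact (elemApp R (homologyπ_naturality φ j) c).trans (elemApp R rfl c).symm
  have hcycmap : ∀ c : A.cycles j, B.iCycles j (cyclesMap φ j c) = φ.f j (A.iCycles j c) := by
    intro c
    exact (elemApp R (cyclesMap_i φ j) c).trans (elemApp R rfl c).symm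
  have htoCyc : ∀ {K : Cx R} (a : K.X i), K.iCycles j (K.toCycles i j a) = K.d i j a :=
    fun {K} a => elemApp R (K.toCycles_i i j) a
  have htoπ : ∀ {K : Cx R} (a : K.X i), K.homologyπ j (K.toCycles i j a) = 0 := by
    intro K a
    have := elemApp R (K.toCycles_comp_homologyπ i j) a
    simpa using this
  have hid : ∀ {K : Cx R} (c : K.cycles j), K.d j l (K.iCycles j c) = 0 := by
    intro K c
    have := elemApp R (K.iCycles_d j l) c
    simpa using this
  rw [quasiIsoAt_iff_isIso_homologyMap]
  constructor
  · intro h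
    have hbij : Function.Bijective (homologyMap φ j) :=
      (ConcreteCategory.isIso_iff_bijective (homologyMap φ j)).1 h
    constructor
    · intro x y hx hxy
      let c : A.cycles j := A.cyclesMk x l hnext hx
      have hic : A.iCycles j c = x := A.i_cyclesMk x l hnext hx
      have h2 : cyclesMap φ j c = B.toCycles i j y := by
        apply hiB
        rw [hcycmap, hic, hxy, htoCyc]
      have h3 : homologyMap φ j (A.homologyπ j c) = 0 := by
        rw [hnatur, h2, htoπ]
      have h4 : A.homologyπ j c = 0 := hbij.1 (by rw [h3, map_zero])
      obtain ⟨a, ha⟩ := pi_ker R i j hij c h4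
      refine ⟨a, ?_⟩
      have := congrArg (A.iCycles j) ha
      rwa [htoCyc, hic] at this
    · intro z hz
      let cz : B.cycles j := B.cyclesMk z l hnext hz
      have hicz : B.iCycles j cz = z := B.i_cyclesMk z l hnext hz
      obtain ⟨h', hh⟩ := hbij.2 (B.homologyπ j cz)
      obtain ⟨c, hc⟩ := hπA h'
      have h5 : B.homologyπ j (cyclesMap φ j c - cz) = 0 := by
        rw [map_sub, ← hnatur, hc, hh, sub_self]
      obtain ⟨b, hb⟩ := pi_ker R i j hij _ h5
      have hb' := congrArg (B.iCycles j) hb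
      rw [htoCyc, map_sub, hcycmap, hicz] at hb'
      exact ⟨A.iCycles j c, b, hid c, by rw [← sub_eq_iff_eq_add', ← hb']⟩
  · rintro ⟨h1, h2⟩
    refine (ConcreteCategory.isIso_iff_bijective _).2 ⟨?_, ?_⟩
    · intro u v huv
      suffices h : ∀ u, homologyMap φ j u = 0 → u = 0 by
        have h7 : homologyMap φ j (u - v) = 0 := by
          rw [map_sub]
          rw [show homologyMap φ j u = homologyMap φ j v from huv, sub_self]
        have := h (u - v) h7
        rwa [sub_eq_zero] at this
      intro u hu
      obtain ⟨c, hc⟩ := hπA u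
      rw [← hc, hnatur] at hu
      obtain ⟨y, hy⟩ := pi_ker R i j hij _ hu
      have hy' := congrArg (B.iCycles j) hy
      rw [htoCyc, hcycmap] at hy'
      obtain ⟨a, ha⟩ := h1 (A.iCycles j c) y (hid c) hy'.symm
      have hca : c = A.toCycles i j a := hiA (by rw [htoCyc, ha])
      rw [← hc, hca, htoπ]
    · intro v
      obtain ⟨c', hc'⟩ := hπB v
      obtain ⟨w, b, hw, hwb⟩ := h2 (B.iCycles j c') (hid c')
      let cw : A.cycles j := A.cyclesMk w l hnext hw
      refine ⟨A.homologyπ j cw, ?_⟩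
      have hicw : A.iCycles j cw = w := A.i_cyclesMk w l hnext hw
      have h6 : cyclesMap φ j cw = c' + B.toCycles i j b := by
        apply hiB
        rw [hcycmap, hicw, map_add, htoCyc, hwb]
      calc homologyMap φ j (A.homologyπ j cw)
          = B.homologyπ j (cyclesMap φ j cw) := hnatur cw
        _ = v := by rw [h6, map_add, htoπ, add_zero, hc']

/-- The elementwise lifting condition. -/
def LiftCond {A B : Cx R} (φ : A ⟶ B) : Prop :=
  ∀ (i j l : ℤ), i + 1 = j → j + 1 = l →
    ∀ (x : A.X j) (y : B.X i), A.d j l x = 0 → φ.f j x = B.d i j y →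
      ∃ m : A.X i, A.d i j m = x ∧ φ.f i m = y

lemma liftCond_iff {A B : Cx R} (φ : A ⟶ B) :
    LiftCond R φ ↔ ((∀ i : ℤ, Function.Surjective (φ.f i)) ∧ QuasiIso φ) := by
  have hcomm : ∀ (i' j' : ℤ) (a : A.X i'), B.d i' j' (φ.f i' a) = φ.f j' (A.d i' j' a) :=
    fun i' j' a => (elemApp R (φ.comm i' j') a).trans (elemApp R rfl a).symm
  constructor
  · intro h
    have cycSurj : ∀ (j l : ℤ), j + 1 = l → ∀ z : B.X j, B.d j l z = 0 →
        ∃ w : A.X j, A.d j l w = 0 ∧ φ.f j w = z := by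
      intro j l hjl z hz
      obtain ⟨m, hm1, hm2⟩ := h j l (l+1) hjl rfl 0 z (map_zero _) (by rw [map_zero, hz])
      exact ⟨m, hm1, hm2⟩
    refine ⟨?_, ?_⟩
    · intro i y
      have hdd : B.d (i+1) (i+1+1) (B.d i (i+1) y) = 0 := by
        have := elemApp R (B.d_comp_d i (i+1) (i+1+1)) y
        simpa using this
      obtain ⟨x, hx1, hx2⟩ := cycSurj (i+1) (i+1+1) rfl (B.d i (i+1) y) hdd
      obtain ⟨m, _, hm2⟩ := h i (i+1) (i+1+1) rfl rfl x y hx1 hx2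
      exact ⟨m, hm2⟩
    · refine ⟨fun j => ?_⟩
      rw [quasiIsoAt_iff_elem R φ (j-1) j (j+1) (by omega) rfl]
      constructor
      · intro x y hx hxy
        obtain ⟨m, hm1, _⟩ := h (j-1) j (j+1) (by omega) rfl x y hx hxy
        exact ⟨m, hm1⟩
      · intro z hz
        obtain ⟨w, hw1, hw2⟩ := cycSurj j (j+1) rfl z hz
        exact ⟨w, 0, hw1, by rw [map_zero, add_zero, hw2]⟩
  · rintro ⟨hs, hq⟩ i j l hij hjl x y hx hxy
    have qj := (quasiIsoAt_iff_elem R φ i j l hij hjl).1 (hq.quasiIsoAt j)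
    obtain ⟨a, ha⟩ := qj.1 x y hx hxy
    set z := y - φ.f i a with hzdef
    have hz : B.d i j z = 0 := by
      rw [hzdef, map_sub, hcomm, ha, ← hxy, sub_self]
    have qi := (quasiIsoAt_iff_elem R φ (i-1) i j (by omega) hij).1 (hq.quasiIsoAt i)
    obtain ⟨w, b, hw, hwb⟩ := qi.2 z hz
    obtain ⟨cpre, hcpre⟩ := hs (i-1) b
    refine ⟨a + w - A.d (i-1) i cpre, ?_, ?_⟩
    · have hdd : A.d i j (A.d (i-1) i cpre) = 0 := by
        have := elemApp R (A.d_comp_d (i-1) i j) cpre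
        simpa using this
      rw [map_sub, map_add, ha, hw, hdd, add_zero, sub_zero]
    · rw [map_sub, map_add, hwb, ← hcomm, hcpre, hzdef]
      abel

section DiskSphere

lemma diskFun_eq_smul (n i : ℤ) (g : diskFun R n i) (z : PLift (i = n ∨ i = n + 1)) :
    g = g z • (fun _ => 1 : diskFun R n i) := by
  funext w
  rw [Subsingleton.elim w z]
  simp [Pi.smul_apply]

lemma diskFun_eq_zero (n i : ℤ) (hni : ¬(i = n ∨ i = n + 1)) (g : diskFun R n i) : g = 0 := by
  funext w
  exact absurd w.down hni

lemma sphereFun_eq_smul (n i : ℤ) (g : sphereFun R n i) (z : PLift (i = n)) :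
    g = g z • (fun _ => 1 : sphereFun R n i) := by
  funext w
  rw [Subsingleton.elim w z]
  simp [Pi.smul_apply]

lemma sphereFun_eq_zero (n i : ℤ) (hni : ¬ i = n) (g : sphereFun R n i) : g = 0 := by
  funext w
  exact absurd w.down hni

lemma disk_d_one (n : ℤ) :
    (disk R n).d n (n + 1) (fun _ => 1 : diskFun R n n) = (fun _ => 1 : diskFun R n (n + 1)) := by
  funext w
  show diskD R n n (n + 1) _ w = 1
  rw [diskD_apply, dif_pos ⟨rfl, rfl⟩]

lemma disk_d_eq_zero (n i j : ℤ) (hi : ¬ i = n) (g : diskFun R n i) :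
    (disk R n).d i j g = 0 := by
  funext w
  show diskD R n i j g w = 0
  rw [diskD_apply, dif_neg (fun hc => hi hc.1)]

lemma sphereToDisk_one (n : ℤ) :
    (sphereToDisk R n).f (n + 1) (fun _ => 1 : sphereFun R (n + 1) (n + 1))
      = (fun _ => 1 : diskFun R n (n + 1)) := by
  funext w
  show sphereToDiskHom R n (n + 1) _ w = 1
  rw [sphereToDiskHom_apply, dif_pos rfl]

/-- The cochain map `sphere R n ⟶ K` determined by a cycle `x` in degree `n`. -/
def toSphere {K : Cx R} (n : ℤ) (x : K.X n) (hx : K.d n (n + 1) x = 0) :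
    sphere R n ⟶ K where
  f i := if h : i = n then
      (ModuleCat.ofHom (LinearMap.smulRight (LinearMap.proj (⟨h⟩ : PLift (i = n))) x :
          (sphere R n).X i →ₗ[R] K.X n) : (sphere R n).X i ⟶ ModuleCat.of R (K.X n)) ≫
        eqToHom (by rw [h])
    else 0
  comm' i j hij := by
    have hij' : i + 1 = j := hij
    subst hij'
    by_cases h : i = n
    · subst h
      rw [dif_pos rfl]
      apply ModuleCat.hom_ext
      apply LinearMap.ext
      intro g
      show K.d i (i + 1) (g ⟨rfl⟩ • x) = _
      rw [map_smul, hx, smul_zero]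
      show _ = ((sphere R i).d i (i+1) ≫ _) g
      rw [show (sphere R i).d i (i+1) = (0 : (sphere R i).X i ⟶ (sphere R i).X (i+1)) from rfl]
      simp
    · rw [dif_neg h]
      rw [show (sphere R n).d i (i+1) = (0 : (sphere R n).X i ⟶ (sphere R n).X (i+1)) from rfl]
      simp

lemma toSphere_apply {K : Cx R} (n : ℤ) (x : K.X n) (hx : K.d n (n + 1) x = 0)
    (g : sphereFun R n n) : (toSphere R n x hx).f n g = g ⟨rfl⟩ • x := by
  dsimp only [toSphere]
  rw [dif_pos rfl]
  rfl

lemma toSphere_apply_ne {K : Cx R} (n : ℤ) (x : K.X n) (hx : K.d n (n + 1) x = 0)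
    (i : ℤ) (hi : ¬ i = n) (g : sphereFun R n i) : (toSphere R n x hx).f i g = 0 := by
  dsimp only [toSphere]
  rw [dif_neg hi]
  rfl

/-- The cochain map `disk R n ⟶ K` determined by an element `m` in degree `n`. -/
def toDisk {K : Cx R} (n : ℤ) (m : K.X n) : disk R n ⟶ K where
  f i :=
    if h : i = n then
      (ModuleCat.ofHom (LinearMap.smulRight (LinearMap.proj (⟨Or.inl h⟩ : PLift (i = n ∨ i = n + 1))) m :
          (disk R n).X i →ₗ[R] K.X n) : (disk R n).X i ⟶ ModuleCat.of R (K.X n)) ≫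
        eqToHom (by rw [h])
    else if h' : i = n + 1 then
      (ModuleCat.ofHom (LinearMap.smulRight (LinearMap.proj (⟨Or.inr h'⟩ : PLift (i = n ∨ i = n + 1)))
          (K.d n (n+1) m) : (disk R n).X i →ₗ[R] K.X (n+1)) :
            (disk R n).X i ⟶ ModuleCat.of R (K.X (n+1))) ≫
        eqToHom (by rw [h'])
    else 0
  comm' i j hij := by
    have hij' : i + 1 = j := hij
    subst hij'
    dsimp only
    by_cases h : i = n
    · subst h
      rw [dif_pos rfl, dif_neg (by omega : ¬ i + 1 = i), dif_pos rfl]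
      apply ModuleCat.hom_ext
      apply LinearMap.ext
      intro g
      show K.d i (i + 1) (g ⟨Or.inl rfl⟩ • m)
        = (diskD R i i (i+1) g) ⟨Or.inr rfl⟩ • K.d i (i+1) m
      rw [map_smul, diskD_apply R i i (i+1) g, dif_pos ⟨rfl, rfl⟩]
    · by_cases h' : i = n + 1
      · subst h'
        rw [dif_neg h, dif_pos rfl, dif_neg (by omega : ¬ n + 1 + 1 = n),
          dif_neg (by omega : ¬ n + 1 + 1 = n + 1)]
        apply ModuleCat.hom_ext
        apply LinearMap.ext
        intro g
        show K.d (n+1) (n+1+1) (g ⟨Or.inr rfl⟩ • K.d n (n+1) m) = _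
        have hdd : K.d (n+1) (n+1+1) (K.d n (n+1) m) = 0 := by
          have := elemApp R (K.d_comp_d n (n+1) (n+1+1)) m
          simpa using this
        rw [map_smul, hdd, smul_zero]
        have hd0 : (disk R n).d (n+1) (n+1+1) = 0 := by
          apply ModuleCat.hom_ext
          apply LinearMap.ext
          intro g'
          exact disk_d_eq_zero R n (n+1) (n+1+1) h g'
        rw [hd0]
        simp
      · rw [dif_neg h, dif_neg h']
        have hd0 : (disk R n).d i (i+1) = 0 := by
          apply ModuleCat.hom_ext
          apply LinearMap.ext
          intro g
          exact disk_d_eq_zero R n i (i+1) h g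
        rw [hd0]
        simp

end DiskSphere

lemma toDisk_apply_self {K : Cx R} (n : ℤ) (m : K.X n) (g : diskFun R n n) :
    (toDisk R n m).f n g = g ⟨Or.inl rfl⟩ • m := by
  dsimp only [toDisk]
  rw [dif_pos rfl]
  rfl

lemma toDisk_apply_succ {K : Cx R} (n : ℤ) (m : K.X n) (g : diskFun R n (n+1)) :
    (toDisk R n m).f (n+1) g = g ⟨Or.inr rfl⟩ • K.d n (n+1) m := by
  dsimp only [toDisk]
  rw [dif_neg (by omega : ¬ (n+1 : ℤ) = n), dif_pos rfl]
  rfl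

lemma toDisk_apply_ne {K : Cx R} (n : ℤ) (m : K.X n) (i : ℤ) (hi : ¬ i = n)
    (hi' : ¬ i = n + 1) (g : diskFun R n i) : (toDisk R n m).f i g = 0 := by
  dsimp only [toDisk]
  rw [dif_neg hi, dif_neg hi']
  rfl

section FilteredAux

lemma mem_fF {n : ℤ} (k p : ℕ) (hp : p ≤ k) {i : ℤ} (g : diskFun R n i) :
    g ∈ (fdisk R n k).F p i := by
  have h2 : (fdisk R n k).F p i = ⊤ := if_pos hp
  rw [h2]
  trivial

lemma mem_fF_sphere {n : ℤ} (k p : ℕ) (hp : p ≤ k) {i : ℤ} (g : sphereFun R n i) :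
    g ∈ (fsphere R n k).F p i := by
  have h2 : (fsphere R n k).F p i = ⊤ := if_pos hp
  rw [h2]
  trivial

lemma fF_eq_zero {n : ℤ} {k p : ℕ} (hp : ¬ p ≤ k) {i : ℤ} {g : diskFun R n i}
    (hg : g ∈ (fdisk R n k).F p i) : g = 0 := by
  have : g ∈ (if p ≤ k then ⊤ else ⊥ : Submodule R (diskFun R n i)) := hg
  rw [if_neg hp] at this
  simpa using this

lemma fF_sphere_eq_zero {n : ℤ} {k p : ℕ} (hp : ¬ p ≤ k) {i : ℤ} {g : sphereFun R n i}
    (hg : g ∈ (fsphere R n k).F p i) : g = 0 := by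
  have : g ∈ (if p ≤ k then ⊤ else ⊥ : Submodule R (sphereFun R n i)) := hg
  rw [if_neg hp] at this
  simpa using this

/-- The filtered map `fsphere R n k ⟶ M` determined by a cycle in `F^k M` of degree `n`. -/
def toFSphere {M : FCx R} (n : ℤ) (k : ℕ) (x : M.C.X n) (hx : M.C.d n (n + 1) x = 0)
    (hxF : x ∈ M.F k n) : fsphere R n k ⟶ M where
  φ := toSphere R n x hx
  preserves p i g hg := by
    by_cases hp : p ≤ k
    · by_cases hi : i = n
      · subst hi
        show (toSphere R i x hx).f i g ∈ M.F p i
        rw [toSphere_apply R i x hx g]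
        exact Submodule.smul_mem _ _ (M.antitone p k hp i hxF)
      · show (toSphere R n x hx).f i g ∈ M.F p i
        rw [toSphere_apply_ne R n x hx i hi g]
        exact Submodule.zero_mem _
    · show (toSphere R n x hx).f i g ∈ M.F p i
      have h0 : (toSphere R n x hx).f i g = 0 := by
        rw [fF_sphere_eq_zero R hp hg]; exact map_zero _
      rw [h0]
      exact Submodule.zero_mem _

/-- The filtered map `fdisk R n k ⟶ M` determined by an element of `F^k M` of degree `n`. -/
def toFDisk {M : FCx R} (n : ℤ) (k : ℕ) (m : M.C.X n) (hmF : m ∈ M.F k n) :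
    fdisk R n k ⟶ M where
  φ := toDisk R n m
  preserves p i g hg := by
    by_cases hp : p ≤ k
    · by_cases hi : i = n
      · subst hi
        show (toDisk R i m).f i g ∈ M.F p i
        rw [toDisk_apply_self R i m g]
        exact Submodule.smul_mem _ _ (M.antitone p k hp i hmF)
      · by_cases hi' : i = n + 1
        · subst hi'
          show (toDisk R n m).f (n+1) g ∈ M.F p (n+1)
          rw [toDisk_apply_succ R n m g]
          exact Submodule.smul_mem _ _
            (M.d_stable p n (n+1) m (M.antitone p k hp n hmF))
        · show (toDisk R n m).f i g ∈ M.F p i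
          rw [toDisk_apply_ne R n m i hi hi' g]
          exact Submodule.zero_mem _
    · show (toDisk R n m).f i g ∈ M.F p i
      have h0 : (toDisk R n m).f i g = 0 := by
        rw [fF_eq_zero R hp hg]; exact map_zero _
      rw [h0]
      exact Submodule.zero_mem _

lemma sphere_hom_ext {K : Cx R} {n : ℤ} {α β : sphere R n ⟶ K}
    (h : α.f n (fun _ => 1) = β.f n (fun _ => 1)) : α = β := by
  apply HomologicalComplex.Hom.ext
  funext i
  apply ModuleCat.hom_ext
  apply LinearMap.ext
  intro g
  by_cases hi : i = n
  · subst hi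
    rw [sphereFun_eq_smul R i i g ⟨rfl⟩]
    exact ((α.f i).hom.map_smul _ _).trans
      ((congrArg (fun y => g ⟨rfl⟩ • y) h).trans ((β.f i).hom.map_smul _ _).symm)
  · rw [sphereFun_eq_zero R n i hi g]
    exact ((α.f i).hom.map_zero).trans ((β.f i).hom.map_zero).symm

lemma disk_hom_ext {K : Cx R} {n : ℤ} {α β : disk R n ⟶ K}
    (h : α.f n (fun _ => 1) = β.f n (fun _ => 1)) : α = β := by
  have hcommα : ∀ (γ : disk R n ⟶ K) (g : diskFun R n n),
      γ.f (n+1) ((disk R n).d n (n+1) g) = K.d n (n+1) (γ.f n g) := by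
    intro γ g
    have h1 := elemApp R (γ.comm n (n+1)) g
    have h2 := elemApp R (rfl : (disk R n).d n (n+1) ≫ γ.f (n+1)
      = (disk R n).d n (n+1) ≫ γ.f (n+1)) g
    exact h2.trans h1.symm
  have h' : α.f (n+1) (fun _ => 1) = β.f (n+1) (fun _ => 1) := by
    rw [← disk_d_one R n, hcommα α, hcommα β, h]
  apply HomologicalComplex.Hom.ext
  funext i
  apply ModuleCat.hom_ext
  apply LinearMap.ext
  intro g
  by_cases hi : i = n
  · subst hi
    rw [diskFun_eq_smul R i i g ⟨Or.inl rfl⟩]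
    exact ((α.f i).hom.map_smul _ _).trans
      ((congrArg (fun y => g ⟨Or.inl rfl⟩ • y) h).trans ((β.f i).hom.map_smul _ _).symm)
  · by_cases hi' : i = n + 1
    · subst hi'
      rw [diskFun_eq_smul R n (n+1) g ⟨Or.inr rfl⟩]
      exact ((α.f (n+1)).hom.map_smul _ _).trans
        ((congrArg (fun y => g ⟨Or.inr rfl⟩ • y) h').trans ((β.f (n+1)).hom.map_smul _ _).symm)
    · rw [diskFun_eq_zero R n i (by tauto) g]
      exact ((α.f i).hom.map_zero).trans ((β.f i).hom.map_zero).symm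

end FilteredAux

lemma hlp_iff {M N : FCx R} (f : M ⟶ N) (n : ℤ) (k : ℕ) :
    HasLiftingProperty (fsphereToDisk R n k) f ↔
      ∀ (x : (M.level k).X (n+1)) (y : (N.level k).X n),
        (M.level k).d (n+1) (n+1+1) x = 0 →
        (levelMap f k).f (n+1) x = (N.level k).d n (n+1) y →
        ∃ m, (M.level k).d n (n+1) m = x ∧ (levelMap f k).f n m = y := by
  constructor
  · intro hlp x y hx hxy
    have hx0 : M.C.d (n+1) (n+1+1) x.1 = 0 := congrArg Subtype.val hx
    have hxy0 : f.φ.f (n+1) x.1 = N.C.d n (n+1) y.1 := congrArg Subtype.val hxy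
    let u : fsphere R (n+1) k ⟶ M := toFSphere R (n+1) k x.1 hx0 x.2
    let v : fdisk R n k ⟶ N := toFDisk R n k y.1 y.2
    have sqw : u ≫ f = fsphereToDisk R n k ≫ v := by
      apply FHom.ext
      rw [comp_φ, comp_φ]
      apply sphere_hom_ext
      show f.φ.f (n+1) (u.φ.f (n+1) _) = v.φ.f (n+1) ((sphereToDisk R n).f (n+1) _)
      rw [sphereToDisk_one]
      show f.φ.f (n+1) ((toSphere R (n+1) x.1 hx0).f (n+1) _)
        = (toDisk R n y.1).f (n+1) _
      rw [toSphere_apply, toDisk_apply_succ, one_smul, one_smul, hxy0]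
    have sq : CommSq u (fsphereToDisk R n k) f v := ⟨sqw⟩
    obtain ⟨⟨l, hl1, hl2⟩⟩ := (hlp.sq_hasLift sq).exists_lift
    have hmF : l.φ.f n (fun _ => 1 : diskFun R n n) ∈ M.F k n :=
      l.preserves k n _ (mem_fF R k k le_rfl _)
    refine ⟨⟨l.φ.f n (fun _ => 1), hmF⟩, ?_, ?_⟩
    · apply Subtype.ext
      show M.C.d n (n+1) (l.φ.f n (fun _ => 1)) = x.1
      have hcomm : l.φ.f (n+1) ((disk R n).d n (n+1) (fun _ => 1))
          = M.C.d n (n+1) (l.φ.f n (fun _ => 1)) :=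
        (elemApp R (l.φ.comm n (n+1)) _).symm.trans (elemApp R rfl _)
      rw [← hcomm, disk_d_one]
      have := congrArg (fun (t : fsphere R (n+1) k ⟶ M) =>
        t.φ.f (n+1) (fun _ => 1 : sphereFun R (n+1) (n+1))) hl1
      simp only [comp_φ] at this
      have hthis : l.φ.f (n+1) ((sphereToDisk R n).f (n+1) (fun _ => 1))
          = u.φ.f (n+1) (fun _ => 1) := this
      rw [sphereToDisk_one] at hthis
      rw [hthis]
      show (toSphere R (n+1) x.1 hx0).f (n+1) _ = x.1
      rw [toSphere_apply, one_smul]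
    · apply Subtype.ext
      show f.φ.f n (l.φ.f n (fun _ => 1)) = y.1
      have := congrArg (fun (t : fdisk R n k ⟶ N) =>
        t.φ.f n (fun _ => 1 : diskFun R n n)) hl2
      simp only [comp_φ] at this
      have hthis : f.φ.f n (l.φ.f n (fun _ => 1)) = v.φ.f n (fun _ => 1) := this
      rw [hthis]
      show (toDisk R n y.1).f n _ = y.1
      rw [toDisk_apply_self, one_smul]
  · intro hcond
    constructor
    intro u v sq
    have hx0d : M.C.d (n+1) (n+1+1) (u.φ.f (n+1) (fun _ => 1)) = 0 := by
      have hcomm : M.C.d (n+1) (n+1+1) (u.φ.f (n+1) (fun _ => 1 : sphereFun R (n+1) (n+1)))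
          = u.φ.f (n+1+1) ((sphere R (n+1)).d (n+1) (n+1+1) (fun _ => 1)) :=
        (elemApp R (u.φ.comm (n+1) (n+1+1)) _).trans (elemApp R rfl _).symm
      rw [hcomm, show (sphere R (n+1)).d (n+1) (n+1+1) = 0 from rfl]
      exact map_zero _
    have hx0F : u.φ.f (n+1) (fun _ => 1) ∈ M.F k (n+1) :=
      u.preserves k (n+1) _ (mem_fF_sphere R k k le_rfl _)
    have hy0F : v.φ.f n (fun _ => 1) ∈ N.F k n :=
      v.preserves k n _ (mem_fF R k k le_rfl _)
    have hsq : f.φ.f (n+1) (u.φ.f (n+1) (fun _ => 1))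
        = N.C.d n (n+1) (v.φ.f n (fun _ => 1)) := by
      have := congrArg (fun (t : fsphere R (n+1) k ⟶ N) =>
        t.φ.f (n+1) (fun _ => 1 : sphereFun R (n+1) (n+1))) sq.w
      simp only [comp_φ] at this
      have hthis : f.φ.f (n+1) (u.φ.f (n+1) (fun _ => 1))
          = v.φ.f (n+1) ((sphereToDisk R n).f (n+1) (fun _ => 1)) := this
      rw [sphereToDisk_one] at hthis
      rw [hthis, ← disk_d_one R n]
      exact (elemApp R (v.φ.comm n (n+1)) _).symm.trans (elemApp R rfl _)
    obtain ⟨m, hm1, hm2⟩ := hcond ⟨u.φ.f (n+1) (fun _ => 1), hx0F⟩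
      ⟨v.φ.f n (fun _ => 1), hy0F⟩ (Subtype.ext hx0d) (Subtype.ext hsq)
    have hm1' : M.C.d n (n+1) m.1 = u.φ.f (n+1) (fun _ => 1) := congrArg Subtype.val hm1
    have hm2' : f.φ.f n m.1 = v.φ.f n (fun _ => 1) := congrArg Subtype.val hm2
    refine ⟨⟨⟨toFDisk R n k m.1 m.2, ?_, ?_⟩⟩⟩
    · apply FHom.ext
      rw [comp_φ]
      apply sphere_hom_ext
      show (toDisk R n m.1).f (n+1) ((sphereToDisk R n).f (n+1) _) = u.φ.f (n+1) _
      rw [sphereToDisk_one, toDisk_apply_succ, one_smul, hm1']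
    · apply FHom.ext
      rw [comp_φ]
      apply disk_hom_ext
      show f.φ.f n ((toDisk R n m.1).f n _) = v.φ.f n _
      rw [toDisk_apply_self, one_smul, hm2']

end Aux

theorem statement_10 {M N : FCx R} (f : M ⟶ N) :
    (∀ (n : ℤ) (k : ℕ), HasLiftingProperty (fsphereToDisk R n k) f) ↔
      ∀ k : ℕ, (∀ i : ℤ, Function.Surjective ((levelMap f k).f i)) ∧
        QuasiIso (levelMap f k) := by
  constructor
  · intro h k
    have hL : LiftCond R (levelMap f k) := by
      intro i j l hij hjl
      subst hij
      subst hjl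
      exact (hlp_iff R f i k).1 (h i k)
    exact (liftCond_iff R (levelMap f k)).1 hL
  · intro h n k
    refine (hlp_iff R f n k).2 ?_
    intro x y hx hxy
    exact (liftCond_iff R (levelMap f k)).2 ⟨(h k).1, (h k).2⟩
      n (n+1) (n+1+1) rfl rfl x y hx hxy

end
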